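/- (Properties of the graded time mesh). Let T > 0, γ ≥ 1, N ≥ 1 an integer, k = T^{1/γ}/N, and t_n = (n k)^γ for 0 ≤ n ≤ N, with k_n = t_n − t_{n−1}. Then: (a) k_n ≤ γ k t_n^{1−1/γ} for all 1 ≤ n ≤ N; (b) t_n ≤ 2^γ t_{n−1} for all 2 ≤ n ≤ N; and (c) the step sizes are nondecreasing, i.e., k_i ≤ k_j whenever 1 ≤ i ≤ j ≤ N. -/

import Mathlib

open Real

/-- Gradient inequality for `x ^ γ`, `γ ≥ 1`:
`b^γ - a^γ ≤ γ * b^(γ-1) * (b - a)` for `0 ≤ a ≤ b`. -/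
lemma rpow_sub_rpow_le_aux (γ a b : ℝ) (hγ : 1 ≤ γ) (ha : 0 ≤ a) (hab : a ≤ b) :
    b ^ γ - a ^ γ ≤ γ * b ^ (γ - 1) * (b - a) := by
  rcases eq_or_lt_of_le (ha.trans hab) with h0 | hb
  · have hb0 : b = 0 := h0.symm
    have ha0 : a = 0 := le_antisymm (hab.trans_eq hb0) ha
    have hγ0 : γ ≠ 0 := by linarith
    simp [hb0, ha0, Real.zero_rpow hγ0]
  · set x : ℝ := (a - b) / b with hxdef
    have hx : -1 ≤ x := by
      rw [hxdef, le_div_iff₀ hb]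
      linarith
    have hbern := one_add_mul_self_le_rpow_one_add hx hγ
    have h1x : 1 + x = a / b := by rw [hxdef]; field_simp; ring
    have hax : a = b * (1 + x) := by rw [h1x, mul_div_cancel₀ _ hb.ne']
    have h1x0 : (0:ℝ) ≤ 1 + x := by rw [h1x]; positivity
    have haγ : a ^ γ = b ^ γ * (1 + x) ^ γ := by
      rw [hax, Real.mul_rpow hb.le h1x0]
    have hbsplit : b ^ γ = b ^ (γ - 1) * b := by
      rw [Real.rpow_sub_one hb.ne' γ]; field_simp
    have hbx : b ^ γ * x = b ^ (γ - 1) * (a - b) := by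
      rw [hbsplit, hxdef]; field_simp
    have h1 : b ^ γ * (1 + γ * x) ≤ a ^ γ := by
      rw [haγ]
      exact mul_le_mul_of_nonneg_left hbern (Real.rpow_nonneg hb.le γ)
    have h2 : b ^ γ * (1 + γ * x) = b ^ γ + γ * (b ^ (γ - 1) * (a - b)) := by
      rw [← hbx]; ring
    rw [h2] at h1
    linarith

/-- Properties of the graded time mesh `t_n = (nk)^γ`, `k = T^{1/γ}/N`:
(a) `k_n ≤ γ k t_n^{1-1/γ}`; (b) `t_n ≤ 2^γ t_{n-1}` for `n ≥ 2`;
(c) the step sizes `k_n = t_n - t_{n-1}` are nondecreasing. -/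
theorem graded_mesh_properties
    (T γ : ℝ) (hT : 0 < T) (hγ : 1 ≤ γ) (N : ℕ) (hN : 1 ≤ N)
    (k : ℝ) (hk : k = T ^ (1 / γ) / N)
    (t : ℕ → ℝ) (ht : ∀ n, t n = ((n : ℝ) * k) ^ γ) :
    (∀ n, 1 ≤ n → n ≤ N →
        t n - t (n - 1) ≤ γ * k * (t n) ^ (1 - 1 / γ)) ∧
    (∀ n, 2 ≤ n → n ≤ N → t n ≤ 2 ^ γ * t (n - 1)) ∧
    (∀ i j, 1 ≤ i → i ≤ j → j ≤ N →
        t i - t (i - 1) ≤ t j - t (j - 1)) := by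
  have hγ0 : (0:ℝ) < γ := by linarith
  have hk0 : 0 < k := by
    rw [hk]
    apply div_pos (Real.rpow_pos_of_pos hT _)
    exact_mod_cast hN
  -- cast of n - 1 for n ≥ 1
  have hcast : ∀ n : ℕ, 1 ≤ n → ((n - 1 : ℕ) : ℝ) = (n : ℝ) - 1 := by
    intro n hn
    push_cast [Nat.cast_sub hn]
    ring
  refine ⟨?_, ?_, ?_⟩
  · -- (a)
    intro n hn _
    rw [ht n, ht (n - 1), hcast n hn]
    have hnk0 : 0 ≤ ((n : ℝ) - 1) * k := by
      have : (1:ℝ) ≤ (n:ℝ) := by exact_mod_cast hn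
      nlinarith
    have hle : ((n : ℝ) - 1) * k ≤ (n : ℝ) * k := by nlinarith
    have hnk : 0 < (n:ℝ) * k := by
      have : (1:ℝ) ≤ (n:ℝ) := by exact_mod_cast hn
      nlinarith
    have key := rpow_sub_rpow_le_aux γ _ _ hγ hnk0 hle
    have hpow : (((n:ℝ) * k) ^ γ) ^ (1 - 1 / γ) = ((n:ℝ) * k) ^ (γ - 1) := by
      rw [← Real.rpow_mul hnk.le]
      congr 1
      field_simp
    rw [hpow]
    have hdiff : (n:ℝ) * k - ((n:ℝ) - 1) * k = k := by ring
    rw [hdiff] at key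
    calc ((n:ℝ) * k) ^ γ - (((n:ℝ) - 1) * k) ^ γ ≤ γ * ((n:ℝ) * k) ^ (γ - 1) * k := key
      _ = γ * k * ((n:ℝ) * k) ^ (γ - 1) := by ring
  · -- (b)
    intro n hn _
    have hn1 : 1 ≤ n := le_trans (by norm_num) hn
    rw [ht n, ht (n - 1), hcast n hn1]
    rw [← Real.mul_rpow (by norm_num) (by nlinarith [hcast, (show (2:ℝ) ≤ (n:ℝ) from by exact_mod_cast hn)] : (0:ℝ) ≤ ((n:ℝ) - 1) * k)]
    apply Real.rpow_le_rpow
    · positivity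
    · have h2n : (2:ℝ) ≤ (n:ℝ) := by exact_mod_cast hn
      nlinarith
    · linarith
  · -- (c)
    -- reduce to adjacent steps via midpoint convexity
    have step : ∀ m : ℕ, 1 ≤ m →
        t m - t (m - 1) ≤ t (m + 1) - t m := by
      intro m hm
      have hconv := convexOn_rpow hγ
      have hm1 : ((m:ℝ) - 1) * k ∈ Set.Ici (0:ℝ) := by
        have : (1:ℝ) ≤ (m:ℝ) := by exact_mod_cast hm
        simp only [Set.mem_Ici]; nlinarith
      have hp1 : ((m:ℝ) + 1) * k ∈ Set.Ici (0:ℝ) := by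
        have : (0:ℝ) ≤ (m:ℝ) := by positivity
        simp only [Set.mem_Ici]; nlinarith
      have hmid := hconv.2 hm1 hp1 (by norm_num : (0:ℝ) ≤ 1/2)
        (by norm_num : (0:ℝ) ≤ 1/2) (by norm_num)
      simp only [smul_eq_mul] at hmid
      have heq : (1/2 : ℝ) * (((m:ℝ) - 1) * k) + (1/2 : ℝ) * (((m:ℝ) + 1) * k)
          = (m:ℝ) * k := by ring
      rw [heq] at hmid
      rw [ht m, ht (m - 1), ht (m + 1), hcast m hm]
      push_cast
      linarith
    intro i j hi hij _
    induction j with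
    | zero => omega
    | succ j ih =>
      rcases Nat.lt_or_ge i (j + 1) with hlt | hge
      · have hij' : i ≤ j := Nat.lt_succ_iff.mp hlt
        have hj1 : 1 ≤ j := le_trans hi hij'
        have := step j hj1
        have h2 := ih hij' (by omega)
        simp only [Nat.add_sub_cancel]
        linarith
      · have : i = j + 1 := le_antisymm hij hge
        rw [this]
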